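/- Let (Y,𝔅,Q) be a complete probability space with lifting ρ, let N ∈ 𝔅 with Q(N) = 0, and fix y₀ ∈ N^c. Define ρ'(B) := (ρ(B) ∩ N^c) ∪ N if y₀ ∈ ρ(B), and ρ'(B) := ρ(B) ∩ N^c otherwise. Then ρ' is a lifting on (Y,𝔅,Q). -/
import Mathlib


open MeasureTheory Set
open scoped Classical

/-- A lifting on the (complete) probability space given by `Q`. -/
def IsLifting {Y : Type*} [MeasurableSpace Y] (Q : Measure Y) (ρ : Set Y → Set Y) : Prop :=
  (∀ B, MeasurableSet B → MeasurableSet (ρ B) ∧ Q (symmDiff B (ρ B)) = 0) ∧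
  (∀ B B', MeasurableSet B → MeasurableSet B' → Q (symmDiff B B') = 0 → ρ B = ρ B') ∧
  ρ ∅ = ∅ ∧ ρ Set.univ = Set.univ ∧
  (∀ B B', MeasurableSet B → MeasurableSet B' → ρ (B ∩ B') = ρ B ∩ ρ B') ∧
  (∀ B, MeasurableSet B → ρ Bᶜ = (ρ B)ᶜ)

theorem stmt14 {Y : Type*} [MeasurableSpace Y] (Q : Measure Y)
    [IsProbabilityMeasure Q] [Q.IsComplete]
    (ρ : Set Y → Set Y) (hρ : IsLifting Q ρ)
    (N : Set Y) (hN : MeasurableSet N) (hN0 : Q N = 0)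
    (y₀ : Y) (hy₀ : y₀ ∈ Nᶜ) :
    IsLifting Q (fun B => if y₀ ∈ ρ B then (ρ B ∩ Nᶜ) ∪ N else ρ B ∩ Nᶜ) := by
  obtain ⟨h1, h2, h0, hu, hinter, hcomp⟩ := hρ
  refine ⟨?_, ?_, ?_, ?_, ?_, ?_⟩
  · intro B hB
    obtain ⟨hm, hz⟩ := h1 B hB
    constructor
    · by_cases h : y₀ ∈ ρ B <;> simp only [h, if_true, if_false] <;>
        measurability
    · refine measure_mono_null ?_ (measure_union_null hz hN0)
      intro y hy
      by_cases h : y₀ ∈ ρ B <;>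
        simp only [h, if_true, if_false, symmDiff_def, Set.mem_union, Set.sup_eq_union,
          Set.mem_diff, Set.mem_inter_iff, Set.mem_compl_iff] at hy ⊢ <;> tauto
  · intro B B' hB hB' hd
    simp [h2 B B' hB hB' hd]
  · simp [h0]
  · simp [hu, Set.compl_union_self]
  · intro B B' hB hB'
    simp only [hinter B B' hB hB']
    by_cases hb : y₀ ∈ ρ B <;> by_cases hb' : y₀ ∈ ρ B' <;>
      simp only [Set.mem_inter_iff, hb, hb', true_and, and_true, if_true, if_false,
        and_false, false_and] <;>
      ext y <;>
      simp only [Set.mem_union, Set.mem_inter_iff, Set.mem_compl_iff] <;> tauto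
  · intro B hB
    simp only [hcomp B hB]
    by_cases h : y₀ ∈ ρ B <;>
      simp only [Set.mem_compl_iff, h, not_true, not_false_iff, if_true, if_false] <;>
      ext y <;>
      simp only [Set.mem_union, Set.mem_inter_iff, Set.mem_compl_iff] <;> tauto
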